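/- Let n \ge 9, f = 0 if n is even and f = 1 if n is odd, and for 1 \le r \le \lceil n/2 \rceil - 4 define m_{n,r} = \sum_{i=0}^{2} 2^{n-4-i} + \sum_{i=0}^{\lceil n/2 \rceil - 4 - r} 2^{n-8-2i} + 2^{2r-1-f}. Then (n+1) m_{n,r} - ex(m_{n,r}) = 2^{n-1}, where ex(m) = \sum_{i} t_i 2^{t_i} + \sum_i 2 i 2^{t_i} over the binary expansion m = \sum_i 2^{t_i} with strictly decreasing exponents t_i. -/

import Mathlib

/-- Closed-form hypercube edge-isoperimetric function: for `m` with binary expansion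
`m = 2^{t_0} + ... + 2^{t_s}` with `t_0 > ... > t_s`, this equals
`∑ t_i 2^{t_i} + ∑ 2 i 2^{t_i}`. -/
def ex : ℕ → ℕ
  | 0 => 0
  | (m+1) =>
      Nat.log2 (m+1) * 2 ^ Nat.log2 (m+1) + 2 * ((m+1) - 2 ^ Nat.log2 (m+1))
        + ex ((m+1) - 2 ^ Nat.log2 (m+1))
decreasing_by
  exact Nat.sub_lt (Nat.succ_pos m) (Nat.two_pow_pos _)

/-- Closed formula for `ex_m(Q_{n,2})`, valid for `1 ≤ m ≤ 2^{n-1}`: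
`ex m` for `m ≤ 2^{n-2}`, and `ex m + 2m - 2^{n-1}` for `2^{n-2} < m ≤ 2^{n-1}`. -/
def exQ (n m : ℕ) : ℤ :=
  if m ≤ 2 ^ (n-2) then (ex m : ℤ) else (ex m : ℤ) + 2 * m - 2 ^ (n-1)

/-- `ξ_m(Q_{n,2}) = (n+1) m - ex_m(Q_{n,2})`. -/
def xi (n m : ℕ) : ℤ := ((n : ℤ) + 1) * m - exQ n m

lemma ex_zero : ex 0 = 0 := by rw [ex]

lemma ex_step (t m : ℕ) (h : m < 2^t) : ex (2^t + m) = t * 2^t + 2 * m + ex m := by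
  obtain ⟨k, hk⟩ : ∃ k, 2^t + m = k + 1 := ⟨2^t + m - 1, by have := Nat.two_pow_pos t; omega⟩
  have hlog : Nat.log2 (k+1) = t := by
    rw [Nat.log2_eq_log_two]
    apply Nat.log_eq_of_pow_le_of_lt_pow
    · omega
    · rw [pow_succ]; omega
  rw [hk, ex, hlog, ← hk, Nat.add_sub_cancel_left]

def T (e s : ℕ) : ℕ := (∑ j ∈ Finset.range s, 2^(e+1+2*j)) + 2^e

lemma T_lt (e s : ℕ) : T e s < 2^(e+2*s+1) := by
  induction s with
  | zero => simpa [T] using Nat.pow_lt_pow_right (by norm_num) (by omega : e < e + 2*0 + 1)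
  | succ s ih =>
      have hT : T e (s+1) = 2^(e+2*s+1) + T e s := by
        rw [T, Finset.sum_range_succ, show e+1+2*s = e+2*s+1 from by ring, T]; ring
      have h1 : 2^(e+2*(s+1)+1) = 2 * 2^(e+2*s+1) * 2 := by
        rw [show e+2*(s+1)+1 = (e+2*s+1)+1+1 from by ring, pow_succ, pow_succ]; ring
      omega

lemma tail (e s : ℕ) : ((e:ℤ)+2*s+2) * T e s - ex (T e s) = 2^(e+2*s+1) := by
  induction s with
  | zero =>
      have h : T e 0 = 2^e + 0 := by simp [T]
      have he : ex (2^e + 0) = e * 2^e + 2*0 + ex 0 := ex_step e 0 (Nat.two_pow_pos e)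
      rw [h, he, ex_zero]
      push_cast
      rw [pow_succ]
      ring
  | succ s ih =>
      have hT : T e (s+1) = 2^(e+2*s+1) + T e s := by
        rw [T, Finset.sum_range_succ, show e+1+2*s = e+2*s+1 from by ring, T]; ring
      have he : ex (2^(e+2*s+1) + T e s)
          = (e+2*s+1) * 2^(e+2*s+1) + 2 * T e s + ex (T e s) :=
        ex_step _ _ (T_lt e s)
      rw [hT, he]
      have hp : (2:ℤ)^(e+2*(s+1)+1) = 4 * 2^(e+2*s+1) := by
        rw [show e+2*(s+1)+1 = (e+2*s+1)+2 from by ring, pow_add]; ring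
      push_cast [hp] at *
      linarith [ih]

open Finset in
/-- Case 1 of Lemma 7: for `n ≥ 9`, `f = 0` if `n` even and `f = 1` if `n` odd, and
`1 ≤ r ≤ ⌈n/2⌉ - 4`, the breakpoint
`m_{n,r} = ∑_{i=0}^{2} 2^{n-4-i} + ∑_{i=0}^{⌈n/2⌉-4-r} 2^{n-8-2i} + 2^{2r-1-f}`
satisfies `(n+1) m_{n,r} - ex(m_{n,r}) = 2^{n-1}`. -/
theorem xi_m_nr (n r f m : ℕ) (hn : 9 ≤ n) (hf : f = if Even n then 0 else 1)
    (hr1 : 1 ≤ r) (hr2 : r ≤ (n+1) / 2 - 4)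
    (hm : m = 2 ^ (n-4) + 2 ^ (n-5) + 2 ^ (n-6)
        + (∑ i ∈ range ((n+1) / 2 - 3 - r), 2 ^ (n - 8 - 2 * i)) + 2 ^ (2*r - 1 - f)) :
    ((n : ℤ) + 1) * m - ex m = 2 ^ (n-1) := by
  have hf2 : f = n % 2 := by
    rcases Nat.even_or_odd n with h | h
    · have := Nat.even_iff.mp h; simp [hf, h, this]
    · have h' := Nat.odd_iff.mp h
      have : ¬ Even n := by simp [Nat.even_iff, h']
      simp [hf, this, h']
  set s := (n+1)/2 - 3 - r with hs
  set e := 2*r - 1 - f with he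
  have hes : e + 2*s + 7 = n := by omega
  have hsum : (∑ i ∈ range s, 2 ^ (n - 8 - 2 * i)) = ∑ j ∈ range s, 2^(e+1+2*j) := by
    rw [← Finset.sum_range_reflect (fun j => 2^(e+1+2*j)) s]
    exact Finset.sum_congr rfl fun i hi => by
      have := Finset.mem_range.mp hi
      congr 1
      omega
  have hmT : m = 2^(n-4) + (2^(n-5) + (2^(n-6) + T e s)) := by
    rw [hm, hsum, T]; ring
  have h6 : T e s < 2^(n-6) := by
    rw [show n-6 = e+2*s+1 from by omega]; exact T_lt e s
  have h5 : 2^(n-6) + T e s < 2^(n-5) := by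
    have : 2^(n-5) = 2 * 2^(n-6) := by rw [show n-5 = (n-6)+1 from by omega, pow_succ]; ring
    omega
  have h4 : 2^(n-5) + (2^(n-6) + T e s) < 2^(n-4) := by
    have : 2^(n-4) = 2 * 2^(n-5) := by rw [show n-4 = (n-5)+1 from by omega, pow_succ]; ring
    omega
  have e3 : ex (2^(n-6) + T e s) = (n-6) * 2^(n-6) + 2 * T e s + ex (T e s) := ex_step _ _ h6
  have e2 : ex (2^(n-5) + (2^(n-6) + T e s))
      = (n-5) * 2^(n-5) + 2 * (2^(n-6) + T e s) + ex (2^(n-6) + T e s) := ex_step _ _ h5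
  have e1 : ex (2^(n-4) + (2^(n-5) + (2^(n-6) + T e s)))
      = (n-4) * 2^(n-4) + 2 * (2^(n-5) + (2^(n-6) + T e s))
        + ex (2^(n-5) + (2^(n-6) + T e s)) := ex_step _ _ h4
  rw [hmT, e1, e2, e3]
  have ht := tail e s
  have k4 : n-4 = e+2*s+3 := by omega
  have k5 : n-5 = e+2*s+2 := by omega
  have k6 : n-6 = e+2*s+1 := by omega
  have k1 : n-1 = e+2*s+6 := by omega
  rw [k4, k5, k6, k1]
  have hNZ : (n:ℤ) = (e:ℤ) + 2*s + 7 := by omega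
  push_cast
  rw [hNZ]
  have p4 : (2:ℤ)^(e+2*s+3) = 4 * 2^(e+2*s+1) := by
    rw [show e+2*s+3 = (e+2*s+1)+2 from by ring, pow_add]; ring
  have p5 : (2:ℤ)^(e+2*s+2) = 2 * 2^(e+2*s+1) := by
    rw [show e+2*s+2 = (e+2*s+1)+1 from by ring, pow_add]; ring
  have p1 : (2:ℤ)^(e+2*s+6) = 32 * 2^(e+2*s+1) := by
    rw [show e+2*s+6 = (e+2*s+1)+5 from by ring, pow_add]; ring
  rw [p4, p5, p1]
  linarith [ht]
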